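/- Let f : [0,1] → ℝ be continuous and define u(z) = ∫₀¹ G(z,y) f(y) dy where G(z,y) = (1/2)·e^{-|z-y|}. Then u is twice continuously differentiable on [0,1], satisfies the differential equation u(z) - u''(z) = f(z) for all z ∈ [0,1], and satisfies the boundary conditions u(0) = u'(0) and u(1) = -u'(1). -/

import Mathlib

open MeasureTheory intervalIntegral

noncomputable def greenA (g : ℝ → ℝ) (z : ℝ) : ℝ := ∫ y in (0:ℝ)..z, Real.exp y * g y

noncomputable def greenB (g : ℝ → ℝ) (z : ℝ) : ℝ := ∫ y in (1:ℝ)..z, Real.exp (-y) * g y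

noncomputable def greenV (g : ℝ → ℝ) (z : ℝ) : ℝ :=
  (1/2) * (Real.exp (-z) * greenA g z - Real.exp z * greenB g z)

noncomputable def greenW (g : ℝ → ℝ) (z : ℝ) : ℝ :=
  (1/2) * (-(Real.exp (-z) * greenA g z) - Real.exp z * greenB g z)

lemma hasDerivAt_greenA (g : ℝ → ℝ) (hg : Continuous g) (z : ℝ) :
    HasDerivAt (greenA g) (Real.exp z * g z) z := by
  have hc : Continuous fun y => Real.exp y * g y := Real.continuous_exp.mul hg
  exact intervalIntegral.integral_hasDerivAt_right (hc.intervalIntegrable 0 z)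
    (hc.stronglyMeasurableAtFilter _ _) hc.continuousAt

lemma hasDerivAt_greenB (g : ℝ → ℝ) (hg : Continuous g) (z : ℝ) :
    HasDerivAt (greenB g) (Real.exp (-z) * g z) z := by
  have hc : Continuous fun y => Real.exp (-y) * g y :=
    (Real.continuous_exp.comp continuous_neg).mul hg
  exact intervalIntegral.integral_hasDerivAt_right (hc.intervalIntegrable 1 z)
    (hc.stronglyMeasurableAtFilter _ _) hc.continuousAt

lemma hasDerivAt_expneg (z : ℝ) : HasDerivAt (fun z : ℝ => Real.exp (-z)) (-Real.exp (-z)) z := by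
  simpa using (hasDerivAt_neg z).exp

lemma exp_mul_cancel₁ (z c : ℝ) : Real.exp (-z) * (Real.exp z * c) = c := by
  rw [← mul_assoc, ← Real.exp_add]; simp

lemma exp_mul_cancel₂ (z c : ℝ) : Real.exp z * (Real.exp (-z) * c) = c := by
  rw [← mul_assoc, ← Real.exp_add]; simp

lemma hasDerivAt_greenV (g : ℝ → ℝ) (hg : Continuous g) (z : ℝ) :
    HasDerivAt (greenV g) (greenW g z) z := by
  have h := (((hasDerivAt_expneg z).mul (hasDerivAt_greenA g hg z)).sub
    ((Real.hasDerivAt_exp z).mul (hasDerivAt_greenB g hg z))).const_mul (1/2 : ℝ)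
  convert h using 1 <;> try rfl
  rw [exp_mul_cancel₁, exp_mul_cancel₂]
  unfold greenW; ring

lemma hasDerivAt_greenW (g : ℝ → ℝ) (hg : Continuous g) (z : ℝ) :
    HasDerivAt (greenW g) (greenV g z - g z) z := by
  have h := ((((hasDerivAt_expneg z).mul (hasDerivAt_greenA g hg z)).neg).sub
    ((Real.hasDerivAt_exp z).mul (hasDerivAt_greenB g hg z))).const_mul (1/2 : ℝ)
  convert h using 1 <;> try rfl
  rw [exp_mul_cancel₁, exp_mul_cancel₂]
  unfold greenV; ring

lemma green_eq (g : ℝ → ℝ) (hg : Continuous g) {z : ℝ} (hz : z ∈ Set.Icc (0:ℝ) 1) :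
    (∫ y in (0:ℝ)..1, (1/2) * Real.exp (-|z - y|) * g y) = greenV g z := by
  obtain ⟨hz0, hz1⟩ := hz
  have hc : Continuous fun y => (1/2) * Real.exp (-|z - y|) * g y :=
    ((continuous_const.mul (Real.continuous_exp.comp
      ((continuous_abs.comp (continuous_const.sub continuous_id)).neg))).mul hg)
  have hsplit := intervalIntegral.integral_add_adjacent_intervals
    (hc.intervalIntegrable (μ := volume) 0 z) (hc.intervalIntegrable (μ := volume) z 1)
  have h2 : (∫ y in (0:ℝ)..z, (1/2) * Real.exp (-|z - y|) * g y)
      = (1/2) * Real.exp (-z) * greenA g z := by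
    unfold greenA
    rw [← intervalIntegral.integral_const_mul]
    apply intervalIntegral.integral_congr
    intro y hy
    rw [Set.uIcc_of_le hz0] at hy
    dsimp only
    rw [show |z - y| = z - y from abs_of_nonneg (by linarith [hy.2]),
      show -(z - y) = y + (-z) by ring, Real.exp_add]
    ring
  have h3 : (∫ y in z..(1:ℝ), (1/2) * Real.exp (-|z - y|) * g y)
      = -((1/2) * Real.exp z * greenB g z) := by
    rw [intervalIntegral.integral_symm]
    apply neg_inj.mpr
    unfold greenB
    rw [← intervalIntegral.integral_const_mul]
    apply intervalIntegral.integral_congr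
    intro y hy
    rw [Set.uIcc_of_ge hz1] at hy
    dsimp only
    rw [show |z - y| = y - z from by
        rw [abs_sub_comm]; exact abs_of_nonneg (by linarith [hy.1]),
      show -(y - z) = z + (-y) by ring, Real.exp_add]
    ring
  rw [← hsplit, h2, h3]
  unfold greenV; ring

theorem green_aux (g : ℝ → ℝ) (hg : Continuous g) (u : ℝ → ℝ)
    (hu : ∀ z, u z = ∫ y in (0:ℝ)..1, (1/2) * Real.exp (-|z - y|) * g y) :
    ContDiffOn ℝ 2 u (Set.Icc 0 1) ∧
    (∀ z ∈ Set.Icc (0:ℝ) 1,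
      u z - derivWithin (derivWithin u (Set.Icc 0 1)) (Set.Icc 0 1) z = g z) ∧
    u 0 = derivWithin u (Set.Icc 0 1) 0 ∧
    u 1 = - derivWithin u (Set.Icc 0 1) 1 := by
  have huv : Set.EqOn u (greenV g) (Set.Icc 0 1) := fun z hz => (hu z).trans (green_eq g hg hz)
  have hud : UniqueDiffOn ℝ (Set.Icc (0:ℝ) 1) := uniqueDiffOn_Icc zero_lt_one
  have hVd : Differentiable ℝ (greenV g) := fun z => (hasDerivAt_greenV g hg z).differentiableAt
  have hWd : Differentiable ℝ (greenW g) := fun z => (hasDerivAt_greenW g hg z).differentiableAt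
  have hdv : deriv (greenV g) = greenW g := funext fun z => (hasDerivAt_greenV g hg z).deriv
  have hdw : deriv (greenW g) = fun z => greenV g z - g z :=
    funext fun z => (hasDerivAt_greenW g hg z).deriv
  have hC : ContDiff ℝ 2 (greenV g) := by
    rw [show (2 : WithTop ℕ∞) = 1 + 1 from rfl, contDiff_succ_iff_deriv]
    refine ⟨hVd, by simp, ?_⟩
    rw [hdv, contDiff_one_iff_deriv]
    exact ⟨hWd, by rw [hdw]; exact hVd.continuous.sub hg⟩
  have hDu : ∀ z ∈ Set.Icc (0:ℝ) 1, derivWithin u (Set.Icc 0 1) z = greenW g z := by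
    intro z hz
    rw [derivWithin_congr huv (huv hz)]
    exact ((hasDerivAt_greenV g hg z).hasDerivWithinAt).derivWithin (hud z hz)
  have hDDu : ∀ z ∈ Set.Icc (0:ℝ) 1,
      derivWithin (derivWithin u (Set.Icc 0 1)) (Set.Icc 0 1) z = greenV g z - g z := by
    intro z hz
    rw [derivWithin_congr (fun x hx => hDu x hx) (hDu z hz)]
    exact ((hasDerivAt_greenW g hg z).hasDerivWithinAt).derivWithin (hud z hz)
  have h0 : (0:ℝ) ∈ Set.Icc (0:ℝ) 1 := ⟨le_refl 0, zero_le_one⟩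
  have h1 : (1:ℝ) ∈ Set.Icc (0:ℝ) 1 := ⟨zero_le_one, le_refl 1⟩
  refine ⟨hC.contDiffOn.congr (fun x hx => huv hx), ?_, ?_, ?_⟩
  · intro z hz
    rw [hDDu z hz, huv hz]
    ring
  · rw [hDu 0 h0, huv h0]
    unfold greenV greenW greenA
    rw [intervalIntegral.integral_same]
    ring
  · rw [hDu 1 h1, huv h1]
    unfold greenV greenW greenB
    rw [intervalIntegral.integral_same]
    ring

theorem exp_kernel_is_green_function_root
    (f : ℝ → ℝ) (hf : ContinuousOn f (Set.Icc 0 1))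
    (u : ℝ → ℝ)
    (hu : ∀ z, u z = ∫ y in (0:ℝ)..1, (1/2) * Real.exp (-|z - y|) * f y) :
    ContDiffOn ℝ 2 u (Set.Icc 0 1) ∧
    (∀ z ∈ Set.Icc (0:ℝ) 1,
      u z - derivWithin (derivWithin u (Set.Icc 0 1)) (Set.Icc 0 1) z = f z) ∧
    u 0 = derivWithin u (Set.Icc 0 1) 0 ∧
    u 1 = - derivWithin u (Set.Icc 0 1) 1 := by
  set g : ℝ → ℝ := Set.IccExtend zero_le_one ((Set.Icc (0:ℝ) 1).restrict f) with hg_def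
  have hg : Continuous g := hf.restrict.Icc_extend'
  have hgf : ∀ x ∈ Set.Icc (0:ℝ) 1, g x = f x := by
    intro x hx
    rw [hg_def, Set.IccExtend_of_mem _ _ hx]
    rfl
  have hu' : ∀ z, u z = ∫ y in (0:ℝ)..1, (1/2) * Real.exp (-|z - y|) * g y := by
    intro z
    rw [hu]
    apply intervalIntegral.integral_congr
    intro y hy
    rw [Set.uIcc_of_le (by norm_num : (0:ℝ) ≤ 1)] at hy
    dsimp only
    rw [hgf y hy]
  obtain ⟨h1, h2, h3, h4⟩ := green_aux g hg u hu'
  exact ⟨h1, fun z hz => by rw [← hgf z hz]; exact h2 z hz, h3, h4⟩
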